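/- Let L̄ ∈ ℝ^{n×n} be the Laplacian of a symmetric nonnegative matrix with zero diagonal whose associated graph is connected, let H_1, …, H_n ∈ ℝ^{m×m} be symmetric positive semidefinite with ∑_{i=1}^n H_i positive definite, let 𝓗 = diag(H_1,…,H_n), and let V = (V_1, 𝟏/√n) be an orthogonal matrix with VᵀL̄V = diag(𝓢, 0) where 𝓢 = diag(κ_2,…,κ_n) has positive diagonal entries. Then the matrix F = −[[(L̄ ⊗ I_m) + 𝓗, V_1𝓢 ⊗ I_m],[−𝓢V_1ᵀ ⊗ I_m, 0]] is Hurwitz, i.e., every complex eigenvalue of F has strictly negative real part. -/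

import Mathlib

open Matrix BigOperators
open scoped Kronecker
open scoped ComplexOrder

/-- The Laplacian of a matrix `A`: `L = D - A` with `D = diag(row sums of A)`. -/
noncomputable def graphLaplacian {n : ℕ} (A : Matrix (Fin n) (Fin n) ℝ) :
    Matrix (Fin n) (Fin n) ℝ :=
  Matrix.diagonal (fun i => ∑ j, A i j) - A

/-- Connectivity of the graph associated to a nonnegative matrix `A`. -/
def graphConnected {n : ℕ} (A : Matrix (Fin n) (Fin n) ℝ) : Prop :=
  ∀ i j : Fin n, Relation.ReflTransGen (fun a b => a ≠ b ∧ 0 < A a b) i j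

/-- The block diagonal matrix `diag(H_1, …, H_n)` acting on `ℝ^{nm}`. -/
def blockDiag {n m : ℕ} (H : Fin n → Matrix (Fin m) (Fin m) ℝ) :
    Matrix (Fin n × Fin m) (Fin n × Fin m) ℝ :=
  fun p q => if p.1 = q.1 then H p.1 p.2 q.2 else 0

namespace St10


noncomputable def mc {k l : Type*} (M : Matrix k l ℝ) : Matrix k l ℂ :=
  M.map (fun a => (a : ℂ))

variable {k l p q : Type*} [Fintype k] [Fintype l] [Fintype p]

omit [Fintype k] [Fintype p] in
lemma mc_mul (M : Matrix k l ℝ) (N : Matrix l p ℝ) : mc (M * N) = mc M * mc N :=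
  Matrix.map_mul (f := Complex.ofRealHom)

omit [Fintype k] [Fintype l] in
lemma mc_add (M N : Matrix k l ℝ) : mc (M + N) = mc M + mc N := by
  ext i j; simp [mc]

omit [Fintype k] [Fintype l] in
lemma mc_neg (M : Matrix k l ℝ) : mc (-M) = -(mc M) := by
  ext i j; simp [mc]

omit [Fintype k] in
lemma mc_one [DecidableEq k] : mc (1 : Matrix k k ℝ) = 1 :=
  Matrix.map_one (fun a : ℝ => (a : ℂ)) rfl rfl

omit [Fintype k] [Fintype l] in
lemma mc_conjTranspose (M : Matrix k l ℝ) : (mc M)ᴴ = mc Mᵀ := by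
  ext i j; simp [mc, Matrix.conjTranspose_apply, Complex.conj_ofReal]

omit [Fintype l] in
lemma mc_posSemidef [DecidableEq k] {M : Matrix k k ℝ} (h : M.PosSemidef) :
    (mc M).PosSemidef := by
  obtain ⟨B, hB⟩ : ∃ B : Matrix k k ℝ, M = Bᴴ * B := by
    open MatrixOrder in exact CStarAlgebra.nonneg_iff_eq_star_mul_self.mp h.nonneg
  have hM : mc M = (mc B)ᴴ * mc B := by
    rw [mc_conjTranspose, ← mc_mul]
    have hBt : Bᴴ = Bᵀ := by ext i j; simp [Matrix.conjTranspose_apply]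
    rw [hB, hBt]
  rw [hM]
  exact Matrix.posSemidef_conjTranspose_mul_self _

lemma dot_transpose (P : Matrix k l ℝ) (x : k → ℂ) (y : l → ℂ) :
    star y ⬝ᵥ (mc Pᵀ).mulVec x = starRingEnd ℂ (star x ⬝ᵥ (mc P).mulVec y) := by
  simp only [dotProduct, Matrix.mulVec, Matrix.transpose_apply, mc, Matrix.map_apply,
    Pi.star_apply, RCLike.star_def, Finset.mul_sum]
  rw [Finset.sum_comm]
  simp only [_root_.map_sum, _root_.map_mul, Complex.conj_conj, Complex.conj_ofReal]
  refine Finset.sum_congr rfl fun i _ => ?_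
  refine Finset.sum_congr rfl fun j _ => ?_
  ring

lemma star_dot_self (w : k → ℂ) :
    star w ⬝ᵥ w = ((∑ i, Complex.normSq (w i) : ℝ) : ℂ) := by
  rw [show ((∑ i, Complex.normSq (w i) : ℝ) : ℂ) = ∑ i, ((Complex.normSq (w i) : ℝ) : ℂ) by
    push_cast; rfl]
  simp [dotProduct, Complex.normSq_eq_conj_mul_self, RCLike.star_def]

omit [Fintype k] [Fintype l] in
lemma kron_transpose (A : Matrix k l ℝ) (B : Matrix p q ℝ) :
    (A ⊗ₖ B)ᵀ = Aᵀ ⊗ₖ Bᵀ :=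
  (Matrix.kroneckerMap_transpose _ _ _).symm



lemma blockDiag_mulVec {n m : ℕ} (H : Fin n → Matrix (Fin m) (Fin m) ℝ)
    (w : Fin n × Fin m → ℂ) (p : Fin n × Fin m) :
    (mc (_root_.blockDiag H)).mulVec w p = ∑ l, ((H p.1 p.2 l : ℝ) : ℂ) * w (p.1, l) := by
  rw [Matrix.mulVec, dotProduct, Fintype.sum_prod_type]
  simp only [mc, Matrix.map_apply, _root_.blockDiag, apply_ite, Complex.ofReal_zero, ite_mul,
    zero_mul]
  rw [Finset.sum_comm]
  simp [Finset.sum_ite_eq']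

lemma blockDiag_dot {n m : ℕ} (H : Fin n → Matrix (Fin m) (Fin m) ℝ)
    (w : Fin n × Fin m → ℂ) :
    star w ⬝ᵥ (mc (_root_.blockDiag H)).mulVec w
      = ∑ i, star (fun kk => w (i, kk)) ⬝ᵥ (mc (H i)).mulVec (fun kk => w (i, kk)) := by
  rw [dotProduct, Fintype.sum_prod_type]
  refine Finset.sum_congr rfl fun i _ => ?_
  rw [dotProduct]
  refine Finset.sum_congr rfl fun kk _ => ?_
  rw [blockDiag_mulVec]
  simp [Matrix.mulVec, dotProduct, mc]

end St10

open St10 in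
theorem statement10 {n m : ℕ} (A : Matrix (Fin n) (Fin n) ℝ)
    (hsym : A.IsSymm) (hnn : ∀ i j, 0 ≤ A i j) (hdiag : ∀ i, A i i = 0)
    (hconn : graphConnected A)
    (H : Fin n → Matrix (Fin m) (Fin m) ℝ)
    (hH : ∀ i, (H i).PosSemidef) (hHsum : (∑ i, H i).PosDef)
    (V₁ : Matrix (Fin n) (Fin (n - 1)) ℝ) (κ : Fin (n - 1) → ℝ) (hκ : ∀ i, 0 < κ i)
    -- V = (V₁, 𝟏/√n) is orthogonal
    (hVorth : (Matrix.fromCols V₁ (Matrix.of fun _ (_ : Unit) => 1 / Real.sqrt n))ᵀ *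
        Matrix.fromCols V₁ (Matrix.of fun _ (_ : Unit) => 1 / Real.sqrt n) = 1)
    -- Vᵀ L̄ V = diag(𝓢, 0)
    (hVdiag : (Matrix.fromCols V₁ (Matrix.of fun _ (_ : Unit) => 1 / Real.sqrt n))ᵀ *
        graphLaplacian A *
        Matrix.fromCols V₁ (Matrix.of fun _ (_ : Unit) => 1 / Real.sqrt n) =
        Matrix.fromBlocks (Matrix.diagonal κ) 0 0 0) :
    -- F = −[[(L̄ ⊗ I_m) + 𝓗, V₁𝓢 ⊗ I_m], [−𝓢V₁ᵀ ⊗ I_m, 0]] is Hurwitz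
    ∀ z : ℂ, Module.End.HasEigenvalue
        (Matrix.mulVecLin
          ((-(Matrix.fromBlocks
              (graphLaplacian A ⊗ₖ (1 : Matrix (Fin m) (Fin m) ℝ) + blockDiag H)
              ((V₁ * Matrix.diagonal κ) ⊗ₖ (1 : Matrix (Fin m) (Fin m) ℝ))
              (-((Matrix.diagonal κ * V₁ᵀ) ⊗ₖ (1 : Matrix (Fin m) (Fin m) ℝ)))
              0)).map (fun a : ℝ => (a : ℂ)))) z →
      z.re < 0 := by
  intro z hz
  classical
  obtain ⟨v, hv⟩ := hz.exists_hasEigenvector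
  -- dispatch n = 0
  by_cases hn0 : n = 0
  · subst hn0
    exact absurd (funext fun s => by rcases s with p | p <;> exact p.1.elim0) hv.2
  have hn : 0 < n := Nat.pos_of_ne_zero hn0
  set c : Matrix (Fin n) Unit ℝ := Matrix.of (fun _ (_ : Unit) => 1 / Real.sqrt n) with hc
  set D : Matrix (Fin (n-1)) (Fin (n-1)) ℝ := Matrix.diagonal κ with hD
  set L : Matrix (Fin n) (Fin n) ℝ := graphLaplacian A with hLdef
  -- orthogonality consequences
  have e : Fin n ≃ Fin (n-1) ⊕ Unit :=
    (finCongr (Nat.succ_pred_eq_of_pos hn).symm).trans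
      (finSumFinEquiv.symm.trans (Equiv.sumCongr (Equiv.refl _) finOneEquiv))
  have hVorth' : Matrix.fromRows V₁ᵀ cᵀ * Matrix.fromCols V₁ c = 1 := by
    rw [← Matrix.transpose_fromCols]; exact hVorth
  have hVVt : Matrix.fromCols V₁ c * Matrix.fromRows V₁ᵀ cᵀ = 1 :=
    (Matrix.fromCols_mul_fromRows_eq_one_comm e V₁ c V₁ᵀ cᵀ).mpr hVorth'
  have hsplit : V₁ * V₁ᵀ + c * cᵀ = 1 := by
    rw [Matrix.fromCols_mul_fromRows] at hVVt; exact hVVt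
  have hVtV : V₁ᵀ * V₁ = 1 := by
    have h := hVorth'
    rw [Matrix.fromRows_mul_fromCols] at h
    have h11 := congrArg Matrix.toBlocks₁₁ h
    rw [Matrix.toBlocks_fromBlocks₁₁] at h11
    rw [h11]
    ext i j
    simp [Matrix.toBlocks₁₁, Matrix.one_apply, Sum.inl.injEq]
  have hLdec : L = V₁ * D * V₁ᵀ := by
    have h1 : Matrix.fromCols V₁ c *
        ((Matrix.fromCols V₁ c)ᵀ * L * Matrix.fromCols V₁ c) *
        (Matrix.fromCols V₁ c)ᵀ = L := by
      calc Matrix.fromCols V₁ c *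
            ((Matrix.fromCols V₁ c)ᵀ * L * Matrix.fromCols V₁ c) *
            (Matrix.fromCols V₁ c)ᵀ
          = (Matrix.fromCols V₁ c * (Matrix.fromCols V₁ c)ᵀ) * L *
            (Matrix.fromCols V₁ c * (Matrix.fromCols V₁ c)ᵀ) := by
            simp only [Matrix.mul_assoc]
        _ = L := by
            rw [Matrix.transpose_fromCols, hVVt, Matrix.one_mul, Matrix.mul_one]
    rw [hVdiag] at h1
    rw [Matrix.transpose_fromCols, Matrix.fromCols_mul_fromBlocks,
      Matrix.fromCols_mul_fromRows] at h1
    simpa using h1.symm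
  -- positive semidefiniteness of L ⊗ 1
  set R : Matrix (Fin (n-1)) (Fin (n-1)) ℝ := Matrix.diagonal (fun i => Real.sqrt (κ i)) with hR
  have hRR : R * R = D := by
    rw [hR, hD, Matrix.diagonal_mul_diagonal,
      show (fun i => Real.sqrt (κ i) * Real.sqrt (κ i)) = κ from
        funext fun i => Real.mul_self_sqrt (hκ i).le]
  have hLkron : (L ⊗ₖ (1 : Matrix (Fin m) (Fin m) ℝ)).PosSemidef := by
    have h2 : (((V₁ * R) ⊗ₖ (1 : Matrix (Fin m) (Fin m) ℝ)))ᴴ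
        = (R * V₁ᵀ) ⊗ₖ (1 : Matrix (Fin m) (Fin m) ℝ) := by
      have htr : (((V₁ * R) ⊗ₖ (1 : Matrix (Fin m) (Fin m) ℝ)))ᴴ
          = (((V₁ * R) ⊗ₖ (1 : Matrix (Fin m) (Fin m) ℝ)))ᵀ := by
        ext pp qq; simp [Matrix.conjTranspose_apply]
      rw [htr, kron_transpose, Matrix.transpose_one, Matrix.transpose_mul, hR,
        Matrix.diagonal_transpose]
    have key : L ⊗ₖ (1 : Matrix (Fin m) (Fin m) ℝ)
        = ((V₁ * R) ⊗ₖ (1 : Matrix (Fin m) (Fin m) ℝ)) *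
          ((V₁ * R) ⊗ₖ (1 : Matrix (Fin m) (Fin m) ℝ))ᴴ := by
      rw [h2, ← Matrix.mul_kronecker_mul, Matrix.mul_one, hLdec,
        show V₁ * R * (R * V₁ᵀ) = V₁ * D * V₁ᵀ from by
          rw [← hRR]; simp only [Matrix.mul_assoc]]
    rw [key]
    exact Matrix.posSemidef_self_mul_conjTranspose _
  -- eigen equations
  set Mr : Matrix (Fin n × Fin m) (Fin n × Fin m) ℝ :=
    L ⊗ₖ (1 : Matrix (Fin m) (Fin m) ℝ) + _root_.blockDiag H with hMr
  set Br : Matrix (Fin n × Fin m) (Fin (n-1) × Fin m) ℝ :=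
    (V₁ * D) ⊗ₖ (1 : Matrix (Fin m) (Fin m) ℝ) with hBr
  set Br' : Matrix (Fin (n-1) × Fin m) (Fin n × Fin m) ℝ :=
    (D * V₁ᵀ) ⊗ₖ (1 : Matrix (Fin m) (Fin m) ℝ) with hBr'
  set x : Fin n × Fin m → ℂ := fun pp => v (Sum.inl pp) with hxdef
  set y : Fin (n-1) × Fin m → ℂ := fun pp => v (Sum.inr pp) with hydef
  have hv_elim : v = Sum.elim x y := by funext s; cases s <;> rfl
  have hveq : ((-(Matrix.fromBlocks Mr Br (-Br') 0)).map (fun a : ℝ => (a : ℂ))).mulVec v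
      = z • v := hv.apply_eq_smul
  have hmap : ((-(Matrix.fromBlocks Mr Br (-Br') 0)).map (fun a : ℝ => (a : ℂ)))
      = -(Matrix.fromBlocks (mc Mr) (mc Br) (-(mc Br')) 0) := by
    show mc (-(Matrix.fromBlocks Mr Br (-Br') 0))
      = -(Matrix.fromBlocks (mc Mr) (mc Br) (-(mc Br')) 0)
    rw [mc_neg]
    congr 1
    rw [show mc (Matrix.fromBlocks Mr Br (-Br') 0)
        = Matrix.fromBlocks (mc Mr) (mc Br) (mc (-Br')) (mc 0) from
      Matrix.fromBlocks_map Mr Br (-Br') 0 _, mc_neg,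
      show mc (0 : Matrix (Fin (n-1) × Fin m) (Fin (n-1) × Fin m) ℝ) = 0 from by
        ext pp qq; simp [mc]]
  rw [hmap, hv_elim] at hveq
  rw [Matrix.neg_mulVec, Matrix.fromBlocks_mulVec] at hveq
  have hneg : ∀ (a : Fin n × Fin m → ℂ) (b : Fin (n-1) × Fin m → ℂ),
      -(Sum.elim a b) = Sum.elim (-a) (-b) := fun a b => by
    funext s; cases s <;> rfl
  have hsmul : z • Sum.elim x y = Sum.elim (z • x) (z • y) := by
    funext s; cases s <;> rfl
  rw [hneg, hsmul] at hveq
  have eq1 : -((mc Mr).mulVec x + (mc Br).mulVec y) = z • x := by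
    funext pp; exact congrFun hveq (Sum.inl pp)
  have eq2 : (mc Br').mulVec x = z • y := by
    have h0 : -((-(mc Br')).mulVec x +
        (0 : Matrix (Fin (n-1) × Fin m) (Fin (n-1) × Fin m) ℂ).mulVec y) = z • y := by
      funext pp; exact congrFun hveq (Sum.inr pp)
    rwa [Matrix.neg_mulVec, Matrix.zero_mulVec, add_zero, neg_neg] at h0
  -- scalar identity
  set qc : ℂ := star x ⬝ᵥ (mc Mr).mulVec x with hqcdef
  set t : ℂ := star x ⬝ᵥ (mc Br).mulVec y with htdef
  have hBt : Br' = Brᵀ := by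
    rw [hBr, hBr', kron_transpose, Matrix.transpose_one, Matrix.transpose_mul, hD,
      Matrix.diagonal_transpose]
  have hconj : star y ⬝ᵥ (mc Br').mulVec x = starRingEnd ℂ t := by
    rw [hBt, htdef]; exact dot_transpose Br x y
  have hkey : z * (star x ⬝ᵥ x) + z * (star y ⬝ᵥ y) = -qc - t + starRingEnd ℂ t := by
    have h1 : star x ⬝ᵥ (z • x) = z * (star x ⬝ᵥ x) := by
      rw [dotProduct_smul, smul_eq_mul]
    have h2 : star y ⬝ᵥ (z • y) = z * (star y ⬝ᵥ y) := by
      rw [dotProduct_smul, smul_eq_mul]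
    rw [← h1, ← h2, ← eq1, ← eq2, dotProduct_neg, dotProduct_add, hconj, hqcdef, htdef]
    ring
  -- real parts
  set sx : ℝ := ∑ pp, Complex.normSq (x pp) with hsx
  set sy : ℝ := ∑ pp, Complex.normSq (y pp) with hsy
  rw [star_dot_self x, star_dot_self y] at hkey
  have hre : z.re * (sx + sy) = -qc.re := by
    have h := congrArg Complex.re hkey
    simp only [Complex.add_re, Complex.mul_re, Complex.ofReal_re, Complex.ofReal_im,
      Complex.neg_re, Complex.sub_re, Complex.conj_re, mul_zero, sub_zero] at h
    linarith [h]
  -- nonnegativity of the quadratic form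
  have hqsplit : qc = (star x ⬝ᵥ (mc (L ⊗ₖ (1 : Matrix (Fin m) (Fin m) ℝ))).mulVec x)
      + ∑ i, (star (fun kk => x (i, kk)) ⬝ᵥ (mc (H i)).mulVec (fun kk => x (i, kk))) := by
    rw [hqcdef, hMr, mc_add, Matrix.add_mulVec, dotProduct_add, blockDiag_dot]
  have hqL : 0 ≤ star x ⬝ᵥ (mc (L ⊗ₖ (1 : Matrix (Fin m) (Fin m) ℝ))).mulVec x :=
    (mc_posSemidef hLkron).dotProduct_mulVec_nonneg x
  have hqH : ∀ i, 0 ≤ star (fun kk => x (i, kk)) ⬝ᵥ (mc (H i)).mulVec (fun kk => x (i, kk)) :=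
    fun i => (mc_posSemidef (hH i)).dotProduct_mulVec_nonneg _
  have hqsum : 0 ≤ ∑ i, (star (fun kk => x (i, kk)) ⬝ᵥ (mc (H i)).mulVec (fun kk => x (i, kk))) :=
    Finset.sum_nonneg fun i _ => hqH i
  have hq0 : 0 ≤ qc := by rw [hqsplit]; exact add_nonneg hqL hqsum
  have hqre : 0 ≤ qc.re := by
    have h := (Complex.le_def.mp hq0).1; simpa using h
  have hqim : qc.im = 0 := by
    have h := (Complex.le_def.mp hq0).2; simpa using h.symm
  -- positivity of sx + sy
  have hsx0 : 0 ≤ sx := Finset.sum_nonneg fun pp _ => Complex.normSq_nonneg _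
  have hsy0 : 0 ≤ sy := Finset.sum_nonneg fun pp _ => Complex.normSq_nonneg _
  have hs_pos : 0 < sx + sy := by
    rcases lt_or_eq_of_le (add_nonneg hsx0 hsy0) with h | h
    · exact h
    · exfalso
      have hsx_eq : sx = 0 := by linarith
      have hsy_eq : sy = 0 := by linarith
      have hx0 : ∀ pp, x pp = 0 := by
        intro pp
        have := (Finset.sum_eq_zero_iff_of_nonneg
          (fun pp _ => Complex.normSq_nonneg (x pp))).mp (hsx.symm.trans hsx_eq) pp (Finset.mem_univ _)
        exact Complex.normSq_eq_zero.mp this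
      have hy0 : ∀ pp, y pp = 0 := by
        intro pp
        have := (Finset.sum_eq_zero_iff_of_nonneg
          (fun pp _ => Complex.normSq_nonneg (y pp))).mp (hsy.symm.trans hsy_eq) pp (Finset.mem_univ _)
        exact Complex.normSq_eq_zero.mp this
      exact hv.2 (by rw [hv_elim]; funext s; cases s with
        | inl pp => exact hx0 pp
        | inr pp => exact hy0 pp)
  rcases eq_or_lt_of_le hqre with hq_eq | hq_pos
  swap
  · -- qc.re > 0 : conclude
    nlinarith [hre, hs_pos, hq_pos]
  · -- qc.re = 0 : derive a contradiction
    exfalso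
    have hqzero : qc = 0 := Complex.ext (by simp [← hq_eq]) (by simp [hqim])
    rw [hqsplit] at hqzero
    obtain ⟨hqL0, hqH0⟩ := (add_eq_zero_iff_of_nonneg hqL hqsum).mp hqzero
    have hHi0 : ∀ i, star (fun kk => x (i, kk)) ⬝ᵥ (mc (H i)).mulVec (fun kk => x (i, kk)) = 0 :=
      fun i => (Finset.sum_eq_zero_iff_of_nonneg (fun i _ => hqH i)).mp hqH0 i (Finset.mem_univ _)
    have hLx : (mc (L ⊗ₖ (1 : Matrix (Fin m) (Fin m) ℝ))).mulVec x = 0 :=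
      ((mc_posSemidef hLkron).dotProduct_mulVec_zero_iff x).mp hqL0
    have hHx : ∀ i, (mc (H i)).mulVec (fun kk => x (i, kk)) = 0 :=
      fun i => ((mc_posSemidef (hH i)).dotProduct_mulVec_zero_iff _).mp (hHi0 i)
    -- diag κ⁻¹ times V₁ᵀ is a useful left multiplier
    set P : Matrix (Fin (n-1)) (Fin n) ℝ := Matrix.diagonal (fun i => (κ i)⁻¹) * V₁ᵀ with hP
    have hPL : (P ⊗ₖ (1 : Matrix (Fin m) (Fin m) ℝ)) * (L ⊗ₖ (1 : Matrix (Fin m) (Fin m) ℝ))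
        = V₁ᵀ ⊗ₖ (1 : Matrix (Fin m) (Fin m) ℝ) := by
      rw [← Matrix.mul_kronecker_mul, Matrix.one_mul,
        show P * L = V₁ᵀ from by
          rw [hP, hLdec,
            show Matrix.diagonal (fun i => (κ i)⁻¹) * V₁ᵀ * (V₁ * D * V₁ᵀ)
              = Matrix.diagonal (fun i => (κ i)⁻¹) * ((V₁ᵀ * V₁) * (D * V₁ᵀ)) from by
              simp only [Matrix.mul_assoc],
            hVtV, Matrix.one_mul, hD, ← Matrix.mul_assoc, Matrix.diagonal_mul_diagonal,
            show (fun i => (κ i)⁻¹ * κ i) = fun _ => (1:ℝ) from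
              funext fun i => inv_mul_cancel₀ (hκ i).ne', Matrix.diagonal_one, Matrix.one_mul]]
    have hV1x : (mc (V₁ᵀ ⊗ₖ (1 : Matrix (Fin m) (Fin m) ℝ))).mulVec x = 0 := by
      calc (mc (V₁ᵀ ⊗ₖ (1 : Matrix (Fin m) (Fin m) ℝ))).mulVec x
          = (mc (P ⊗ₖ (1 : Matrix (Fin m) (Fin m) ℝ)) *
             mc (L ⊗ₖ (1 : Matrix (Fin m) (Fin m) ℝ))).mulVec x := by rw [← mc_mul, hPL]
        _ = (mc (P ⊗ₖ (1 : Matrix (Fin m) (Fin m) ℝ))).mulVec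
              ((mc (L ⊗ₖ (1 : Matrix (Fin m) (Fin m) ℝ))).mulVec x) := by
            rw [← Matrix.mulVec_mulVec]
        _ = 0 := by rw [hLx, Matrix.mulVec_zero]
    have hk2 : (V₁ ⊗ₖ (1 : Matrix (Fin m) (Fin m) ℝ)) * (V₁ᵀ ⊗ₖ (1 : Matrix (Fin m) (Fin m) ℝ))
        + (c * cᵀ) ⊗ₖ (1 : Matrix (Fin m) (Fin m) ℝ) = 1 := by
      rw [← Matrix.mul_kronecker_mul, Matrix.one_mul, ← Matrix.add_kronecker, hsplit,
        Matrix.one_kronecker_one]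
    have hxcc : x = (mc ((c * cᵀ) ⊗ₖ (1 : Matrix (Fin m) (Fin m) ℝ))).mulVec x := by
      calc x = (mc 1).mulVec x := by rw [mc_one, Matrix.one_mulVec]
        _ = (mc ((V₁ ⊗ₖ (1 : Matrix (Fin m) (Fin m) ℝ)) * (V₁ᵀ ⊗ₖ (1 : Matrix (Fin m) (Fin m) ℝ)))
              + mc ((c * cᵀ) ⊗ₖ (1 : Matrix (Fin m) (Fin m) ℝ))).mulVec x := by
            rw [← mc_add, hk2]
        _ = (mc (V₁ ⊗ₖ (1 : Matrix (Fin m) (Fin m) ℝ))).mulVec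
              ((mc (V₁ᵀ ⊗ₖ (1 : Matrix (Fin m) (Fin m) ℝ))).mulVec x)
            + (mc ((c * cᵀ) ⊗ₖ (1 : Matrix (Fin m) (Fin m) ℝ))).mulVec x := by
            rw [Matrix.add_mulVec, mc_mul, ← Matrix.mulVec_mulVec]
        _ = (mc ((c * cᵀ) ⊗ₖ (1 : Matrix (Fin m) (Fin m) ℝ))).mulVec x := by
            rw [hV1x, Matrix.mulVec_zero, zero_add]
    have hxconst : ∀ i i' kk, x (i, kk) = x (i', kk) := by
      intro i i' kk
      have h1 := congrFun hxcc (i, kk)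
      have h2 := congrFun hxcc (i', kk)
      rw [h1, h2]
      rfl
    set u : Fin m → ℂ := fun kk => x (⟨0, hn⟩, kk) with hu
    have hxu : ∀ pp, x pp = u pp.2 := fun pp => hxconst pp.1 ⟨0, hn⟩ pp.2
    have hHu : ∀ i, (mc (H i)).mulVec u = 0 := by
      intro i
      have h := hHx i
      rwa [show (fun kk => x (i, kk)) = u from funext fun kk => hxu (i, kk)] at h
    have hsumu : (mc (∑ i, H i)).mulVec u = 0 := by
      have hmcsum : mc (∑ i, H i) = ∑ i, mc (H i) := by
        ext pp qq; simp [mc, Matrix.sum_apply]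
      have hmv : (∑ i, mc (H i)).mulVec u = ∑ i, (mc (H i)).mulVec u := by
        funext kk
        simp [Matrix.mulVec, dotProduct, Matrix.sum_apply, Finset.sum_mul]
        rw [Finset.sum_comm]
      rw [hmcsum, hmv]
      simp [hHu]
    have hdet : IsUnit (mc (∑ i, H i)).det := by
      have h1 : (mc (∑ i, H i)).det = (((∑ i, H i).det : ℝ) : ℂ) :=
        (RingHom.map_det Complex.ofRealHom _).symm
      rw [h1]
      exact isUnit_iff_ne_zero.mpr (Complex.ofReal_ne_zero.mpr (ne_of_gt hHsum.det_pos))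
    have hu0 : u = 0 := by
      calc u = ((mc (∑ i, H i))⁻¹ * mc (∑ i, H i)).mulVec u := by
            rw [Matrix.nonsing_inv_mul _ hdet, Matrix.one_mulVec]
        _ = (mc (∑ i, H i))⁻¹.mulVec ((mc (∑ i, H i)).mulVec u) := by
            rw [Matrix.mulVec_mulVec]
        _ = 0 := by rw [hsumu, Matrix.mulVec_zero]
    have hx0 : x = 0 := funext fun pp => by rw [hxu pp, hu0]; rfl
    -- now y = 0
    have hBy : (mc Br).mulVec y = 0 := by
      have h := eq1
      rw [hx0, Matrix.mulVec_zero, zero_add, smul_zero, neg_eq_zero] at h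
      exact h
    have hk3 : (P ⊗ₖ (1 : Matrix (Fin m) (Fin m) ℝ)) * Br = 1 := by
      rw [hBr, ← Matrix.mul_kronecker_mul, Matrix.one_mul,
        show P * (V₁ * D) = 1 from by
          rw [hP, hD,
            show Matrix.diagonal (fun i => (κ i)⁻¹) * V₁ᵀ * (V₁ * Matrix.diagonal κ)
              = Matrix.diagonal (fun i => (κ i)⁻¹) * ((V₁ᵀ * V₁) * Matrix.diagonal κ) from by
              simp only [Matrix.mul_assoc],
            hVtV, Matrix.one_mul, Matrix.diagonal_mul_diagonal,
            show (fun i => (κ i)⁻¹ * κ i) = fun _ => (1:ℝ) from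
              funext fun i => inv_mul_cancel₀ (hκ i).ne', Matrix.diagonal_one],
        Matrix.one_kronecker_one]
    have hy0 : y = 0 := by
      calc y = (mc ((P ⊗ₖ (1 : Matrix (Fin m) (Fin m) ℝ)) * Br)).mulVec y := by
            rw [hk3, mc_one, Matrix.one_mulVec]
        _ = (mc (P ⊗ₖ (1 : Matrix (Fin m) (Fin m) ℝ))).mulVec ((mc Br).mulVec y) := by
            rw [mc_mul, ← Matrix.mulVec_mulVec]
        _ = 0 := by rw [hBy, Matrix.mulVec_zero]
    exact hv.2 (by
      rw [hv_elim, hx0, hy0]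
      funext s; cases s <;> rfl)
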